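/- If s = f₁f₂⋯f_z is the greedy nonclassical LZ77 parsing of a string s, then the strings f_i · f_{i+1}[1] for i ∈ [1..z−1] (each phrase extended by the first letter of the next phrase) are pairwise distinct. -/
import Mathlib

/-- Starting (0-indexed) position of the `i`-th phrase of a parsing. -/
def startPos {α : Type*} (ps : List (List α)) (i : ℕ) : ℕ :=
  ((ps.take i).flatten).length

/-- A nonclassical LZ77 parsing of `s`: phrases are nonempty, concatenate to
`s`, and each phrase is either a single letter or has an occurrence in `s`
starting strictly before the phrase's start. -/
def IsNonclassicalLZ77Parsing {α : Type*} (s : List α) (ps : List (List α)) : Prop :=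
  ps.flatten = s ∧ (∀ p ∈ ps, p ≠ []) ∧
  ∀ i : Fin ps.length, (ps.get i).length = 1 ∨
    ∃ j < startPos ps i, ps.get i <+: s.drop j

/-- A greedy nonclassical LZ77 parsing: each phrase is as long as possible. -/
def IsGreedyNonclassicalLZ77Parsing {α : Type*} (s : List α) (ps : List (List α)) : Prop :=
  IsNonclassicalLZ77Parsing s ps ∧
  ∀ i : Fin ps.length, ∀ L : ℕ, (ps.get i).length < L →
    startPos ps i + L ≤ s.length →
    ¬ (1 < L ∧ ∃ j < startPos ps i, (s.drop (startPos ps i)).take L <+: s.drop j)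

section Aux

variable {α : Type*}

lemma flatten_drop_startPos (ps : List (List α)) (i : ℕ) :
    (ps.flatten).drop (startPos ps i) = (ps.drop i).flatten := by
  have h : ps.flatten = (ps.take i).flatten ++ (ps.drop i).flatten := by
    rw [← List.flatten_append, List.take_append_drop]
  rw [startPos, h, List.drop_left]

lemma startPos_succ (ps : List (List α)) (i : ℕ) (hi : i < ps.length) :
    startPos ps (i+1) = startPos ps i + ps[i].length := by
  rw [startPos, startPos, List.take_succ, List.getElem?_eq_getElem hi,
    Option.toList_some, List.flatten_append, List.length_append, List.flatten_cons,
    List.flatten_nil, List.append_nil]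

lemma startPos_mono (ps : List (List α)) {a b : ℕ} (h : a ≤ b) :
    startPos ps a ≤ startPos ps b := by
  unfold startPos
  have h1 : ps.take a = (ps.take b).take a := by rw [List.take_take, min_eq_left h]
  obtain ⟨r, hr⟩ := List.take_prefix a (ps.take b)
  rw [h1]
  conv_rhs => rw [← hr]
  rw [List.flatten_append, List.length_append]
  omega

lemma ext_prefix (ps : List (List α)) (i : ℕ) (hi : i + 1 < ps.length) :
    ps[i]'(by omega) ++ (ps[i+1]'hi).take 1 <+: (ps.drop i).flatten := by
  have h1 : ps.drop i = ps[i]'(by omega) :: ps.drop (i+1) :=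
    List.drop_eq_getElem_cons (by omega)
  have h2 : ps.drop (i+1) = ps[i+1]'hi :: ps.drop (i+2) :=
    List.drop_eq_getElem_cons hi
  rw [h1, h2, List.flatten_cons, List.flatten_cons]
  obtain ⟨r, hr⟩ := List.take_prefix 1 (ps[i+1]'hi)
  refine ⟨r ++ (ps.drop (i+2)).flatten, ?_⟩
  simp only [List.append_assoc]
  rw [← List.append_assoc (List.take 1 _) r, hr]

set_option maxHeartbeats 1000000 in
lemma key_lemma (s : List α) (ps : List (List α))
    (h : IsGreedyNonclassicalLZ77Parsing s ps)
    (i j : Fin ps.length) (hi : (i : ℕ) + 1 < ps.length) (hj : (j : ℕ) + 1 < ps.length)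
    (hij : (i : ℕ) < (j : ℕ)) :
    ps.get i ++ (ps.get ⟨(i : ℕ) + 1, hi⟩).take 1 ≠
      ps.get j ++ (ps.get ⟨(j : ℕ) + 1, hj⟩).take 1 := by
  obtain ⟨⟨hflat, hne, _⟩, hgreedy⟩ := h
  subst hflat
  intro heq
  simp only [List.get_eq_getElem] at heq
  set L := (ps[(j : ℕ)]'(by omega)).length + 1 with hL
  have hnej : (ps[(j : ℕ)]'(by omega)) ≠ [] := hne _ (List.getElem_mem _)
  have hnej1 : (ps[(j : ℕ)+1]'hj) ≠ [] := hne _ (List.getElem_mem _)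
  have hnei : (ps[(i : ℕ)]'(by omega)) ≠ [] := hne _ (List.getElem_mem _)
  have hlen1 : 1 ≤ (ps[(j : ℕ)+1]'hj).length := List.length_pos_iff.mpr hnej1
  have hlenj : 1 ≤ (ps[(j : ℕ)]'(by omega)).length := List.length_pos_iff.mpr hnej
  have extj_len : ((ps[(j : ℕ)]'(by omega)) ++ (ps[(j : ℕ)+1]'hj).take 1).length = L := by
    simp only [List.length_append, List.length_take]
    omega
  have pj : (ps[(j : ℕ)]'(by omega)) ++ (ps[(j : ℕ)+1]'hj).take 1 <+:
      (ps.flatten).drop (startPos ps (j : ℕ)) := by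
    rw [flatten_drop_startPos]; exact ext_prefix ps (j : ℕ) hj
  have pi : (ps[(i : ℕ)]'(by omega)) ++ (ps[(i : ℕ)+1]'hi).take 1 <+:
      (ps.flatten).drop (startPos ps (i : ℕ)) := by
    rw [flatten_drop_startPos]; exact ext_prefix ps (i : ℕ) hi
  have take_eq : ((ps.flatten).drop (startPos ps (j : ℕ))).take L =
      (ps[(j : ℕ)]'(by omega)) ++ (ps[(j : ℕ)+1]'hj).take 1 := by
    obtain ⟨r, hr⟩ := pj
    rw [← hr, List.take_left' extj_len]
  have hlt : startPos ps (i : ℕ) < startPos ps (j : ℕ) := by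
    have h1 : startPos ps (i : ℕ) < startPos ps ((i : ℕ) + 1) := by
      rw [startPos_succ ps (i : ℕ) (by omega)]
      have := List.length_pos_iff.mpr hnei
      omega
    exact lt_of_lt_of_le h1 (startPos_mono ps (by omega))
  have hslen : startPos ps (j : ℕ) + L ≤ (ps.flatten).length := by
    have h1 := pj.length_le
    rw [extj_len, List.length_drop] at h1
    omega
  refine hgreedy j L (by simp [hL]) ?_ ⟨by omega, startPos ps (i : ℕ), ?_, ?_⟩
  · simpa using hslen
  · simpa using hlt
  · have : ((ps.flatten).drop (startPos ps (↑j : ℕ))).take L <+: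
        (ps.flatten).drop (startPos ps (i : ℕ)) := by
      rw [take_eq, ← heq]; exact pi
    simpa using this

end Aux

/-- In a greedy nonclassical LZ77 parsing `f₁⋯f_z`, the strings
`fᵢ · fᵢ₊₁[1]` (each phrase extended by the first letter of the next phrase),
for `i ∈ [1..z-1]`, are pairwise distinct. -/
theorem greedy_nonclassical_extended_phrases_distinct {α : Type*}
    (s : List α) (ps : List (List α))
    (h : IsGreedyNonclassicalLZ77Parsing s ps) :
    ∀ i j : Fin ps.length, ∀ (hi : (i : ℕ) + 1 < ps.length) (hj : (j : ℕ) + 1 < ps.length),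
      i ≠ j →
      ps.get i ++ (ps.get ⟨(i : ℕ) + 1, hi⟩).take 1 ≠
        ps.get j ++ (ps.get ⟨(j : ℕ) + 1, hj⟩).take 1 := by
  intro i j hi hj hij
  rcases lt_trichotomy (i : ℕ) (j : ℕ) with hlt | heq | hgt
  · exact key_lemma s ps h i j hi hj hlt
  · exact absurd (Fin.ext heq) hij
  · exact (key_lemma s ps h j i hj hi hgt).symm
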